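/- Fix r > 0 and a sequence r_j > 0 with r_j -> 0, and define linear maps Lambda_j(z_1, ..., z_n) = (z_1 / r_j, z_2 / sqrt(r_j), ..., z_n / sqrt(r_j)). Then for every compact set K contained in P_{1/(2r)} there exists J such that for all j >= J, K is contained in Lambda_j(B_r(r e_1)). -/

import Mathlib

open Complex Filter

/-- The Siegel-type paraboloid domain `P_α ⊆ ℂ^{n+1}`. -/
def Para (n : ℕ) (α : ℝ) : Set (EuclideanSpace ℂ (Fin (n + 1))) :=
  {z | α * ∑ i ∈ Finset.univ.erase 0, ‖z i‖ ^ 2 < (z 0).re}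

/-- The anisotropic dilation `Λ` with parameter `s`:
`(z₁,…,z_n) ↦ (z₁/s, z₂/√s, …, z_n/√s)`. -/
noncomputable def Lam (n : ℕ) (s : ℝ) (z : EuclideanSpace ℂ (Fin (n + 1))) :
    EuclideanSpace ℂ (Fin (n + 1)) :=
  WithLp.toLp 2 (fun i => if i = 0 then z i / (s : ℂ) else z i / (Real.sqrt s : ℂ))

/-- Every compact subset of `P_{1/(2r)}` is eventually contained in
`Λ_j(B_r(r e₁))`. -/
theorem stmt_1 (n : ℕ) (r : ℝ) (hr : 0 < r)
    (rj : ℕ → ℝ) (hrj : ∀ j, 0 < rj j)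
    (hlim : Tendsto rj atTop (nhds 0))
    (K : Set (EuclideanSpace ℂ (Fin (n + 1))))
    (hKc : IsCompact K) (hKP : K ⊆ Para n (1 / (2 * r))) :
    ∃ J : ℕ, ∀ j ≥ J,
      K ⊆ Lam n (rj j) '' Metric.ball (EuclideanSpace.single 0 (r : ℂ)) r := by
  classical
  rcases K.eq_empty_or_nonempty with hK | hK
  · exact ⟨0, fun j _ => by simp [hK]⟩
  set f : EuclideanSpace ℂ (Fin (n + 1)) → ℝ :=
    fun z => (2 * r * (z 0).re - ∑ i ∈ Finset.univ.erase 0, ‖z i‖ ^ 2) / (‖z 0‖ ^ 2 + 1)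
    with hf
  have hfc : Continuous f := by
    apply Continuous.div
    · fun_prop
    · fun_prop
    · intro z; positivity
  obtain ⟨z₀, hz₀K, hz₀min⟩ := hKc.exists_isMinOn hK hfc.continuousOn
  have hfpos : ∀ z ∈ K, 0 < f z := by
    intro z hz
    have h : (1 / (2 * r)) * ∑ i ∈ Finset.univ.erase 0, ‖z i‖ ^ 2 < (z 0).re := hKP hz
    have h2r : (0:ℝ) < 2 * r := by linarith
    apply div_pos
    · have := (div_lt_iff₀ h2r).mp (by rw [div_mul_eq_mul_div, one_mul] at h; exact h)
      linarith
    · positivity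
  have hε : 0 < f z₀ := hfpos _ hz₀K
  obtain ⟨J, hJ⟩ := eventually_atTop.mp (hlim.eventually (gt_mem_nhds hε))
  refine ⟨J, fun j hj z hz => ?_⟩
  set s := rj j with hsdef
  have hs : 0 < s := hrj j
  have hsz : s < f z := lt_of_lt_of_le (hJ j hj) (hz₀min hz)
  set Q : ℝ := ∑ i ∈ Finset.univ.erase 0, ‖z i‖ ^ 2 with hQ
  have hkey : s * (‖z 0‖ ^ 2 + 1) < 2 * r * (z 0).re - Q := by
    have hd : (0:ℝ) < ‖z 0‖ ^ 2 + 1 := by positivity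
    rw [hf] at hsz
    exact (lt_div_iff₀ hd).mp hsz
  have hsq : 0 < Real.sqrt s := Real.sqrt_pos.mpr hs
  set w : EuclideanSpace ℂ (Fin (n + 1)) :=
    WithLp.toLp 2 (fun i => if i = 0 then (s : ℂ) * z i else ((Real.sqrt s : ℝ) : ℂ) * z i) with hw
  refine ⟨w, ?_, ?_⟩
  · rw [Metric.mem_ball, EuclideanSpace.dist_eq]
    have hQnn : 0 ≤ Q := by
      rw [hQ]; exact Finset.sum_nonneg fun i _ => by positivity
    have h0 : dist (w 0) (EuclideanSpace.single (0 : Fin (n+1)) (r : ℂ) 0) ^ 2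
        = ‖(s : ℂ) * z 0 - (r : ℂ)‖ ^ 2 := by
      rw [hw]; simp [EuclideanSpace.single_apply, Complex.dist_eq]
    have hrest : ∑ i ∈ Finset.univ.erase 0,
        dist (w i) (EuclideanSpace.single (0 : Fin (n+1)) (r : ℂ) i) ^ 2 = s * Q := by
      rw [hQ, Finset.mul_sum]
      apply Finset.sum_congr rfl
      intro i hi
      have hi0 : i ≠ 0 := (Finset.mem_erase.mp hi).1
      rw [hw]
      simp only [PiLp.toLp_apply, if_neg hi0, EuclideanSpace.single_apply]
      rw [dist_zero_right, norm_mul, Complex.norm_real,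
        Real.norm_eq_abs, _root_.abs_of_nonneg hsq.le, mul_pow, Real.sq_sqrt hs.le]
    have hsum : ∑ i, dist (w i) (EuclideanSpace.single (0 : Fin (n+1)) (r : ℂ) i) ^ 2
        = ‖(s : ℂ) * z 0 - (r : ℂ)‖ ^ 2 + s * Q := by
      rw [← Finset.add_sum_erase Finset.univ _ (Finset.mem_univ (0 : Fin (n+1))), h0, hrest]
    rw [hsum, show ∀ x : ℝ, (Real.sqrt x < r ↔ x < r ^ 2) from
      fun x => Real.sqrt_lt' hr]
    have hexp : ‖(s : ℂ) * z 0 - (r : ℂ)‖ ^ 2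
        = (s * (z 0).re - r) ^ 2 + (s * (z 0).im) ^ 2 := by
      rw [Complex.sq_norm, Complex.normSq_apply]
      simp [Complex.sub_re, Complex.sub_im, Complex.mul_re, Complex.mul_im]
      ring
    have hnorm : ‖z 0‖ ^ 2 = (z 0).re ^ 2 + (z 0).im ^ 2 := by
      rw [Complex.sq_norm, Complex.normSq_apply]; ring
    rw [hexp]
    nlinarith [mul_lt_mul_of_pos_left hkey hs, hnorm, mul_pos hs hs, hs,
      mul_nonneg hs.le hQnn]
  · ext i
    simp only [Lam, hw, PiLp.toLp_apply]
    split
    · rw [mul_div_cancel_left₀]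
      exact Complex.ofReal_ne_zero.mpr hs.ne'
    · rw [mul_div_cancel_left₀]
      exact Complex.ofReal_ne_zero.mpr hsq.ne'
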